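/- Let G be a connected graph on m vertices and k_e ≥ 2 real weights on its edges with total weight |k| = ∑_e k_e. Let b be a symmetric n×n matrix with nonnegative entries. Then W := ∑_{v ∈ [n]^m} ∏_{e ∈ E(G)} b_{v(e)}^{k_e} satisfies W ≤ (∑_i (∑_j b_{ij}^2)^{|k|/2})^{2(m-1)/|k|} · (∑_i max_j b_{ij}^{|k|})^{1 - 2(m-1)/|k|}. -/

import Mathlib

open Real Finset

namespace LVH

lemma rpow_add_nonneg {x : ℝ} (hx : 0 ≤ x) {y z : ℝ} (hy : 0 ≤ y) (hz : 0 ≤ z) :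
    x ^ (y + z) = x ^ y * x ^ z := by
  rcases hx.eq_or_lt with h | h
  · subst h
    rcases hy.eq_or_lt with h1 | h1
    · rcases hz.eq_or_lt with h2 | h2
      · simp [← h1, ← h2]
      · rw [← h1]; simp [Real.zero_rpow (by linarith : (0:ℝ) + z ≠ 0), Real.zero_rpow h2.ne']
    · rw [Real.zero_rpow (by linarith : y + z ≠ 0), Real.zero_rpow h1.ne', zero_mul]
  · exact Real.rpow_add h y z

lemma rpow_sum_nonneg {ι : Type*} [DecidableEq ι] (s : Finset ι) {x : ℝ} (hx : 0 ≤ x)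
    (f : ι → ℝ) (hf : ∀ i ∈ s, 0 ≤ f i) : x ^ (∑ i ∈ s, f i) = ∏ i ∈ s, x ^ f i := by
  induction s using Finset.induction with
  | empty => simp
  | insert _ _ hni ih =>
    rename_i a s
    rw [Finset.sum_insert hni, Finset.prod_insert hni,
      rpow_add_nonneg hx (hf a (mem_insert_self a s))
        (Finset.sum_nonneg fun i hi => hf i (mem_insert_of_mem hi)),
      ih fun i hi => hf i (mem_insert_of_mem hi)]

lemma rpow_rpow {x : ℝ} (hx : 0 ≤ x) (a b : ℝ) : (x ^ a) ^ b = x ^ (a * b) :=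
  (Real.rpow_mul hx a b).symm

/-- Hölder inequality, conjugate-exponent form over `Finset.univ`. -/
lemma holder_conj {ι : Type*} [Fintype ι] {p q : ℝ} (hp : 1 < p) (hpq : p⁻¹ + q⁻¹ = 1)
    (f g : ι → ℝ) (hf : ∀ i, 0 ≤ f i) (hg : ∀ i, 0 ≤ g i) :
    ∑ i, f i * g i ≤ (∑ i, f i ^ p) ^ (1 / p) * (∑ i, g i ^ q) ^ (1 / q) :=
  Real.inner_le_Lp_mul_Lq_of_nonneg Finset.univ (Real.holderConjugate_iff.mpr ⟨hp, hpq⟩) (fun i _ => hf i) fun i _ => hg i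

section Machinery

variable {n : ℕ} (b : Fin n → Fin n → ℝ)

/-- Row sums of squares. -/
def cc (i : Fin n) : ℝ := ∑ j, b i j ^ 2

/-- Row maxima. -/
noncomputable def MM (i : Fin n) : ℝ := ⨆ j, b i j

/-- `B₂`-type norm. -/
noncomputable def B2 (K : ℝ) : ℝ := ∑ i, cc b i ^ (K / 2)

/-- `B∞`-type norm. -/
noncomputable def Bi (K : ℝ) : ℝ := ∑ i, MM b i ^ K

/-- Application of the entrywise-squared matrix. -/
def Ap (g : Fin n → ℝ) (i : Fin n) : ℝ := ∑ j, b i j ^ 2 * g j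

variable {b}

lemma cc_nonneg (i : Fin n) : 0 ≤ cc b i := Finset.sum_nonneg fun j _ => sq_nonneg _

lemma MM_nonneg (hb : ∀ i j, 0 ≤ b i j) (i : Fin n) : 0 ≤ MM b i :=
  Real.iSup_nonneg fun j => hb i j

lemma le_MM (i j : Fin n) : b i j ≤ MM b i :=
  le_ciSup (Set.Finite.bddAbove (Set.finite_range _)) j

lemma B2_nonneg (K : ℝ) : 0 ≤ B2 b K :=
  Finset.sum_nonneg fun i _ => Real.rpow_nonneg (cc_nonneg i) _

lemma Bi_nonneg' (hb : ∀ i j, 0 ≤ b i j) (K : ℝ) : 0 ≤ Bi b K :=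
  Finset.sum_nonneg fun i _ => Real.rpow_nonneg (MM_nonneg hb i) _

lemma Ap_nonneg {g : Fin n → ℝ} (hg : ∀ i, 0 ≤ g i) (i : Fin n) : 0 ≤ Ap b g i :=
  Finset.sum_nonneg fun j _ => mul_nonneg (sq_nonneg _) (hg j)

lemma sum_Ap (hsym : ∀ i j, b i j = b j i) (g : Fin n → ℝ) :
    ∑ i, Ap b g i = ∑ j, cc b j * g j := by
  unfold Ap
  rw [Finset.sum_comm]
  refine Finset.sum_congr rfl fun j _ => ?_
  rw [cc, Finset.sum_mul]
  exact Finset.sum_congr rfl fun i _ => by rw [hsym i j]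

/-- The key invariant: `g` has "`c`-degree `2d` and `M`-degree `w`". -/
def Wgt (K d w : ℝ) (g : Fin n → ℝ) : Prop :=
  0 ≤ d ∧ 0 ≤ w ∧ (∀ i, 0 ≤ g i) ∧
    ((d = 0 ∧ w = 0 ∧ ∀ i, g i = 1) ∨
      (0 < 2 * d + w ∧
        ∑ i, g i ^ (K / (2 * d + w)) ≤
          B2 b K ^ (2 * d / (2 * d + w)) * Bi b K ^ (w / (2 * d + w))))

lemma W_c (K : ℝ) : Wgt (b := b) K 1 0 (cc b) := by
  refine ⟨zero_le_one, le_refl 0, cc_nonneg, Or.inr ⟨by norm_num, ?_⟩⟩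
  norm_num [B2]

lemma W_M (hb : ∀ i j, 0 ≤ b i j) (K : ℝ) {w : ℝ} (hw : 0 ≤ w) :
    Wgt (b := b) K 0 w (fun i => MM b i ^ w) := by
  rcases hw.eq_or_lt with h | h
  · refine ⟨le_refl 0, hw, fun i => Real.rpow_nonneg (MM_nonneg hb i) _,
      Or.inl ⟨rfl, h.symm, fun i => by show MM b i ^ w = 1; rw [← h, Real.rpow_zero]⟩⟩
  · refine ⟨le_refl 0, hw, fun i => Real.rpow_nonneg (MM_nonneg hb i) _,
      Or.inr ⟨by linarith, ?_⟩⟩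
    have h20 : 2 * (0:ℝ) + w = w := by ring
    rw [h20]
    have : ∀ i : Fin n, (MM b i ^ w) ^ (K / w) = MM b i ^ K := fun i => by
      rw [rpow_rpow (MM_nonneg hb i), mul_div_cancel₀ _ h.ne']
    rw [Finset.sum_congr rfl fun i _ => this i]
    have : (2:ℝ) * 0 / w = 0 := by simp
    rw [this, Real.rpow_zero, one_mul, div_self h.ne', Real.rpow_one]
    exact le_of_eq rfl

lemma W_mul (hb : ∀ i j, 0 ≤ b i j) {K d1 w1 d2 w2 : ℝ} {g1 g2 : Fin n → ℝ}
    (h1 : Wgt (b := b) K d1 w1 g1) (h2 : Wgt (b := b) K d2 w2 g2) :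
    Wgt (b := b) K (d1 + d2) (w1 + w2) (fun i => g1 i * g2 i) := by
  obtain ⟨hd1, hw1, hg1, hc1⟩ := h1
  obtain ⟨hd2, hw2, hg2, hc2⟩ := h2
  refine ⟨by linarith, by linarith, fun i => mul_nonneg (hg1 i) (hg2 i), ?_⟩
  rcases hc1 with ⟨hd10, hw10, hone1⟩ | ⟨hδ1, hb1⟩
  · subst hd10; subst hw10
    simp only [zero_add]
    rcases hc2 with ⟨hd20, hw20, hone2⟩ | ⟨hδ2, hb2⟩
    · exact Or.inl ⟨hd20, hw20, fun i => by rw [hone1 i, hone2 i, one_mul]⟩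
    · refine Or.inr ⟨hδ2, le_trans (le_of_eq ?_) hb2⟩
      exact Finset.sum_congr rfl fun i _ => by rw [hone1 i, one_mul]
  · rcases hc2 with ⟨hd20, hw20, hone2⟩ | ⟨hδ2, hb2⟩
    · subst hd20; subst hw20
      simp only [add_zero]
      refine Or.inr ⟨hδ1, le_trans (le_of_eq ?_) hb1⟩
      exact Finset.sum_congr rfl fun i _ => by rw [hone2 i, mul_one]
    · -- genuine Hölder case
      set δ1 := 2 * d1 + w1 with hδ1def
      set δ2 := 2 * d2 + w2 with hδ2def
      have hδe : 2 * (d1 + d2) + (w1 + w2) = δ1 + δ2 := by ring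
      refine Or.inr ⟨by rw [hδe]; linarith, ?_⟩
      rw [hδe]
      set δ := δ1 + δ2 with hδdef
      have hδpos : 0 < δ := by linarith
      have key : ∀ i : Fin n, (g1 i * g2 i) ^ (K / δ) =
          (g1 i ^ (K / δ1)) ^ (δ1 / δ) * (g2 i ^ (K / δ2)) ^ (δ2 / δ) := by
        intro i
        rw [rpow_rpow (hg1 i), rpow_rpow (hg2 i),
          Real.mul_rpow (hg1 i) (hg2 i)]
        congr 2
        · field_simp
        · field_simp
      rw [Finset.sum_congr rfl fun i _ => key i]
      have hp1 : 1 < δ / δ1 := by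
        rw [lt_div_iff₀ hδ1]
        linarith
      have hpq : (δ / δ1)⁻¹ + (δ / δ2)⁻¹ = 1 := by
        field_simp
        exact hδdef.symm
      have hh := holder_conj hp1 hpq
        (fun i => (g1 i ^ (K / δ1)) ^ (δ1 / δ)) (fun i => (g2 i ^ (K / δ2)) ^ (δ2 / δ))
        (fun i => Real.rpow_nonneg (Real.rpow_nonneg (hg1 i) _) _)
        (fun i => Real.rpow_nonneg (Real.rpow_nonneg (hg2 i) _) _)
      refine le_trans hh ?_
      have e1 : ∀ i : Fin n, ((g1 i ^ (K / δ1)) ^ (δ1 / δ)) ^ (δ / δ1) = g1 i ^ (K / δ1) := by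
        intro i
        rw [rpow_rpow (Real.rpow_nonneg (hg1 i) _), div_mul_div_comm,
          mul_comm δ1 δ, mul_div_mul_left _ _ hδpos.ne', div_self hδ1.ne', Real.rpow_one]
      have e2 : ∀ i : Fin n, ((g2 i ^ (K / δ2)) ^ (δ2 / δ)) ^ (δ / δ2) = g2 i ^ (K / δ2) := by
        intro i
        rw [rpow_rpow (Real.rpow_nonneg (hg2 i) _), div_mul_div_comm,
          mul_comm δ2 δ, mul_div_mul_left _ _ hδpos.ne', div_self hδ2.ne', Real.rpow_one]
      rw [Finset.sum_congr rfl fun i _ => e1 i, Finset.sum_congr rfl fun i _ => e2 i]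
      have hs1 : (0:ℝ) ≤ ∑ i, g1 i ^ (K / δ1) :=
        Finset.sum_nonneg fun i _ => Real.rpow_nonneg (hg1 i) _
      have hs2 : (0:ℝ) ≤ ∑ i, g2 i ^ (K / δ2) :=
        Finset.sum_nonneg fun i _ => Real.rpow_nonneg (hg2 i) _
      have h1d : 1 / (δ / δ1) = δ1 / δ := by rw [one_div_div]
      have h2d : 1 / (δ / δ2) = δ2 / δ := by rw [one_div_div]
      rw [h1d, h2d]
      have hB2 : (0:ℝ) ≤ B2 b K := B2_nonneg K
      have hBi : (0:ℝ) ≤ Bi b K := Bi_nonneg' hb K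
      calc (∑ i, g1 i ^ (K / δ1)) ^ (δ1 / δ) * (∑ i, g2 i ^ (K / δ2)) ^ (δ2 / δ)
          ≤ (B2 b K ^ (2 * d1 / δ1) * Bi b K ^ (w1 / δ1)) ^ (δ1 / δ) *
            (B2 b K ^ (2 * d2 / δ2) * Bi b K ^ (w2 / δ2)) ^ (δ2 / δ) := by
            have hB2 : (0:ℝ) ≤ B2 b K := B2_nonneg K
            have hBi : (0:ℝ) ≤ Bi b K := Bi_nonneg' hb K
            have hq1 : (0:ℝ) ≤ δ1 / δ := by positivity
            have hq2 : (0:ℝ) ≤ δ2 / δ := by positivity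
            exact mul_le_mul (Real.rpow_le_rpow hs1 hb1 hq1)
              (Real.rpow_le_rpow hs2 hb2 hq2)
              (Real.rpow_nonneg hs2 _)
              (Real.rpow_nonneg (mul_nonneg (Real.rpow_nonneg hB2 _) (Real.rpow_nonneg hBi _)) _)
        _ = B2 b K ^ (2 * (d1 + d2) / δ) * Bi b K ^ ((w1 + w2) / δ) := by
            rw [Real.mul_rpow (Real.rpow_nonneg hB2 _) (Real.rpow_nonneg hBi _),
              Real.mul_rpow (Real.rpow_nonneg hB2 _) (Real.rpow_nonneg hBi _),
              rpow_rpow hB2, rpow_rpow hBi, rpow_rpow hB2, rpow_rpow hBi]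
            rw [mul_mul_mul_comm, ← rpow_add_nonneg hB2 (by positivity) (by positivity),
              ← rpow_add_nonneg hBi (by positivity) (by positivity)]
            congr 2 <;> [skip; skip] <;> field_simp <;> ring

lemma rpow_mul_rpow {X : ℝ} (hX : 0 ≤ X) {a c : ℝ} (ha : 0 ≤ a) (hc : 0 ≤ c) :
    X ^ a * X ^ c = X ^ (a + c) := (rpow_add_nonneg hX ha hc).symm

lemma pow_of_prod {X Y : ℝ} (hX : 0 ≤ X) (hY : 0 ≤ Y) (a c e : ℝ) :
    (X ^ a * Y ^ c) ^ e = X ^ (a * e) * Y ^ (c * e) := by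
  rw [Real.mul_rpow (Real.rpow_nonneg hX _) (Real.rpow_nonneg hY _),
    rpow_rpow hX, rpow_rpow hY]

lemma W_apply (hb : ∀ i j, 0 ≤ b i j) (hsym : ∀ i j, b i j = b j i) {K d w : ℝ}
    {g : Fin n → ℝ} (h : Wgt (b := b) K d w g) (hdK : 2 * (d + 1) + w ≤ K) :
    Wgt (b := b) K (d + 1) w (Ap b g) := by
  obtain ⟨hd, hw, hg, hc⟩ := h
  have hB2 : (0:ℝ) ≤ B2 b K := B2_nonneg K
  have hBi : (0:ℝ) ≤ Bi b K := Bi_nonneg' hb K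
  rcases hc with ⟨hd0, hw0, hone⟩ | ⟨hδ, hgb⟩
  · subst hd0; subst hw0
    have hAc : Ap b g = cc b := funext fun i => by
      unfold Ap cc; exact Finset.sum_congr rfl fun j _ => by rw [hone j, mul_one]
    rw [hAc]
    simp only [zero_add, add_zero]
    exact W_c K
  · -- main case
    have hK2 : 2 < K := by linarith
    have hKpos : (0:ℝ) < K := by linarith
    have hKne : K ≠ 0 := hKpos.ne'
    have hKm2 : (0:ℝ) < K - 2 := by linarith
    have hK2ne : K - 2 ≠ 0 := hKm2.ne'
    have hApnn : ∀ i, 0 ≤ Ap b g i := Ap_nonneg hg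
    refine ⟨by linarith, hw, hApnn, Or.inr ⟨by linarith, ?_⟩⟩
    obtain ⟨δ, hδdef⟩ : ∃ x : ℝ, x = 2 * d + w := ⟨_, rfl⟩
    obtain ⟨δ', hδ'def⟩ : ∃ x : ℝ, x = δ + 2 := ⟨_, rfl⟩
    rw [← hδdef] at hδ hgb
    have hKδ : δ' ≤ K := by rw [hδ'def, hδdef]; linarith
    have hδ'e : 2 * (d + 1) + w = δ' := by rw [hδ'def, hδdef]; ring
    rw [hδ'e]
    have hδne : δ ≠ 0 := hδ.ne'
    have hδ'pos : (0:ℝ) < δ' := by rw [hδ'def]; linarith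
    have hδ'ne : δ' ≠ 0 := hδ'pos.ne'
    have hδ'2 : (2:ℝ) < δ' := by rw [hδ'def]; linarith
    obtain ⟨G0, hG0def⟩ : ∃ x : ℝ, x = B2 b K ^ (2 * d / δ) * Bi b K ^ (w / δ) := ⟨_, rfl⟩
    rw [← hG0def] at hgb
    have hG0 : (0:ℝ) ≤ G0 := by
      rw [hG0def]
      exact mul_nonneg (Real.rpow_nonneg hB2 _) (Real.rpow_nonneg hBi _)
    have hsgnn : (0:ℝ) ≤ ∑ i, g i ^ (K / δ) :=
      Finset.sum_nonneg fun i _ => Real.rpow_nonneg (hg i) _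
    set g' : Fin n → ℝ := fun j => g j ^ ((K - 2) / δ) with hg'def
    have hg' : ∀ j, 0 ≤ g' j := fun j => Real.rpow_nonneg (hg j) _
    have hq1 : (0:ℝ) ≤ 2 / K := by positivity
    have hq2 : (0:ℝ) ≤ 2 * d / δ * ((K - 2) / K) :=
      mul_nonneg (div_nonneg (by linarith) hδ.le) (div_nonneg hKm2.le hKpos.le)
    -- step 3 : the collapsed sum bound
    have hstep3 : ∑ j, cc b j * g' j ≤ B2 b K ^ (2 / K) * G0 ^ ((K - 2) / K) := by
      have hp1 : (1:ℝ) < K / 2 := by linarith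
      have hconj : (K / 2)⁻¹ + (K / (K - 2))⁻¹ = 1 := by
        field_simp
        try ring
      have hh := holder_conj hp1 hconj (cc b) g' cc_nonneg hg'
      refine le_trans hh ?_
      have e1 : ∀ j : Fin n, g' j ^ (K / (K - 2)) = g j ^ (K / δ) := by
        intro j
        show (g j ^ ((K - 2) / δ)) ^ (K / (K - 2)) = _
        rw [rpow_rpow (hg j)]
        congr 1
        field_simp
        try ring
      rw [Finset.sum_congr rfl fun j _ => e1 j]
      have h2K : 1 / (K / 2) = 2 / K := one_div_div _ _
      have h2K' : 1 / (K / (K - 2)) = (K - 2) / K := one_div_div _ _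
      rw [h2K, h2K']
      have : (∑ i, g i ^ (K / δ)) ^ ((K - 2) / K) ≤ G0 ^ ((K - 2) / K) :=
        Real.rpow_le_rpow hsgnn hgb (div_nonneg hKm2.le hKpos.le)
      exact mul_le_mul_of_nonneg_left this (Real.rpow_nonneg hB2 _)
    have hRHS : B2 b K ^ (2 / K) * G0 ^ ((K - 2) / K) =
        B2 b K ^ (2 / K + 2 * d / δ * ((K - 2) / K)) * Bi b K ^ (w / δ * ((K - 2) / K)) := by
      rw [hG0def, pow_of_prod hB2 hBi, ← mul_assoc, rpow_mul_rpow hB2 hq1 hq2]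
    rcases eq_or_lt_of_le hKδ with hKe | hKl
    · -- boundary case δ' = K
      have hrw : ∀ i : Fin n, Ap b g i ^ (K / δ') = Ap b g i := fun i => by
        rw [hKe, div_self hKne, Real.rpow_one]
      rw [Finset.sum_congr rfl fun i _ => hrw i, sum_Ap hsym]
      have hδK : δ = K - 2 := by rw [← hKe, hδ'def]; ring
      have hgg' : ∀ j : Fin n, g j = g' j := fun j => by
        show g j = g j ^ ((K - 2) / δ)
        have hone : (K - 2) / δ = 1 := by rw [div_eq_one_iff_eq hδne]; linarith
        rw [hone, Real.rpow_one]
      calc ∑ j, cc b j * g j = ∑ j, cc b j * g' j :=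
            Finset.sum_congr rfl fun j _ => by rw [hgg' j]
        _ ≤ B2 b K ^ (2 / K) * G0 ^ ((K - 2) / K) := hstep3
        _ = B2 b K ^ (2 * (d + 1) / δ') * Bi b K ^ (w / δ') := by
            rw [hRHS,
              show 2 / K + 2 * d / δ * ((K - 2) / K) = 2 * (d + 1) / δ' by
                rw [hδK, hKe]
                field_simp
                ring,
              show w / δ * ((K - 2) / K) = w / δ' by
                rw [hδK, hKe]
                field_simp]
    · -- main case δ' < K
      have hKδ' : (0:ℝ) < K - δ' := by linarith
      have hKδ'ne : K - δ' ≠ 0 := hKδ'.ne'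
      have hδK2 : δ < K - 2 := by rw [hδ'def] at hKl; linarith
      have hδe : δ = δ' - 2 := by rw [hδ'def]; ring
      have hδ'2ne : δ' - 2 ≠ 0 := by linarith
      obtain ⟨τ, hτdef⟩ : ∃ x : ℝ, x = δ / (K - 2) := ⟨_, rfl⟩
      have hτpos : 0 < τ := by rw [hτdef]; exact div_pos hδ hKm2
      have hτlt : τ < 1 := by
        rw [hτdef, div_lt_one hKm2]
        exact hδK2
      have h1τ : (0:ℝ) < 1 - τ := by linarith
      -- step 1 : pointwise Hölder in j
      have hstep1 : ∀ i, Ap b g i ≤ cc b i ^ (1 - τ) * Ap b g' i ^ τ := by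
        intro i
        have hp1 : (1:ℝ) < 1 / (1 - τ) := by
          rw [lt_div_iff₀ h1τ]; linarith
        have hconj : (1 / (1 - τ))⁻¹ + (1 / τ)⁻¹ = 1 := by
          rw [one_div, one_div, inv_inv, inv_inv]; ring
        have hh := holder_conj hp1 hconj
          (fun j => ((b i j ^ 2 : ℝ)) ^ (1 - τ)) (fun j => ((b i j ^ 2 : ℝ)) ^ τ * g j)
          (fun j => Real.rpow_nonneg (sq_nonneg _) _)
          (fun j => mul_nonneg (Real.rpow_nonneg (sq_nonneg _) _) (hg j))
        have e0 : ∀ j : Fin n, (b i j ^ 2 : ℝ) ^ (1 - τ) * ((b i j ^ 2 : ℝ) ^ τ * g j)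
            = b i j ^ 2 * g j := by
          intro j
          rw [← mul_assoc, ← rpow_add_nonneg (sq_nonneg _) h1τ.le hτpos.le,
            sub_add_cancel, Real.rpow_one]
        have e1 : ∀ j : Fin n, ((b i j ^ 2 : ℝ) ^ (1 - τ)) ^ (1 / (1 - τ)) = b i j ^ 2 := by
          intro j
          rw [rpow_rpow (sq_nonneg _), mul_one_div, div_self h1τ.ne', Real.rpow_one]
        have e2 : ∀ j : Fin n, ((b i j ^ 2 : ℝ) ^ τ * g j) ^ (1 / τ) = b i j ^ 2 * g' j := by
          intro j
          rw [Real.mul_rpow (Real.rpow_nonneg (sq_nonneg _) _) (hg j),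
            rpow_rpow (sq_nonneg _), mul_one_div, div_self hτpos.ne', Real.rpow_one]
          congr 1
          show g j ^ (1 / τ) = g j ^ ((K - 2) / δ)
          rw [hτdef, one_div_div]
        rw [Finset.sum_congr rfl fun j _ => e0 j] at hh
        rw [Finset.sum_congr rfl fun j _ => e1 j] at hh
        rw [Finset.sum_congr rfl fun j _ => e2 j] at hh
        rw [one_div_one_div, one_div_one_div] at hh
        exact hh
      -- step 2 : outer Hölder in i
      obtain ⟨vv, hvvdef⟩ : ∃ x : ℝ, x = K / δ' := ⟨_, rfl⟩
      have hvvpos : 0 < vv := by rw [hvvdef]; exact div_pos hKpos hδ'pos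
      obtain ⟨ρ', hρ'def⟩ : ∃ x : ℝ, x = (K - 2) * δ' / (2 * (K - δ')) := ⟨_, rfl⟩
      obtain ⟨ρ, hρdef⟩ : ∃ x : ℝ, x = (K - 2) * δ' / (δ * K) := ⟨_, rfl⟩
      have hρ'1 : (1:ℝ) < ρ' := by
        rw [hρ'def, lt_div_iff₀ (by positivity)]
        nlinarith [mul_pos hKpos (show (0:ℝ) < δ' - 2 by linarith)]
      have hρconj : ρ'⁻¹ + ρ⁻¹ = 1 := by
        rw [hρ'def, hρdef, hδe]
        field_simp
        ring
      have hρpos : (0:ℝ) < ρ := by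
        rw [hρdef]
        exact div_pos (mul_pos hKm2 hδ'pos) (mul_pos hδ hKpos)
      have hρr : (0:ℝ) ≤ 1 / ρ := by positivity
      have pointwise : ∀ i, Ap b g i ^ vv ≤
          cc b i ^ ((1 - τ) * vv) * Ap b g' i ^ (τ * vv) := by
        intro i
        have := Real.rpow_le_rpow (hApnn i) (hstep1 i) hvvpos.le
        rwa [Real.mul_rpow (Real.rpow_nonneg (cc_nonneg i) _)
            (Real.rpow_nonneg (Ap_nonneg hg' i) _),
          rpow_rpow (cc_nonneg i), rpow_rpow (Ap_nonneg hg' i)] at this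
      have hsum1 : ∑ i, Ap b g i ^ vv ≤
          ∑ i, cc b i ^ ((1 - τ) * vv) * Ap b g' i ^ (τ * vv) :=
        Finset.sum_le_sum fun i _ => pointwise i
      have hh2 := holder_conj hρ'1 hρconj
        (fun i => cc b i ^ ((1 - τ) * vv)) (fun i => Ap b g' i ^ (τ * vv))
        (fun i => Real.rpow_nonneg (cc_nonneg i) _)
        (fun i => Real.rpow_nonneg (Ap_nonneg hg' i) _)
      have h1τe : 1 - τ = (K - δ') / (K - 2) := by
        rw [hτdef, hδe]
        field_simp
        try ring
      have f1 : ∀ i : Fin n, (cc b i ^ ((1 - τ) * vv)) ^ ρ' = cc b i ^ (K / 2) := by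
        intro i
        rw [rpow_rpow (cc_nonneg i)]
        congr 1
        rw [h1τe, hvvdef, hρ'def]
        field_simp
      have f2 : ∀ i : Fin n, (Ap b g' i ^ (τ * vv)) ^ ρ = Ap b g' i := by
        intro i
        rw [rpow_rpow (Ap_nonneg hg' i)]
        have hτρ : τ * vv * ρ = 1 := by
          rw [hτdef, hvvdef, hρdef, hδe]
          field_simp
          try ring
        rw [hτρ, Real.rpow_one]
      rw [Finset.sum_congr rfl fun i _ => f1 i, Finset.sum_congr rfl fun i _ => f2 i] at hh2
      have hsAg' : ∑ i, Ap b g' i ≤ B2 b K ^ (2 / K) * G0 ^ ((K - 2) / K) := by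
        rw [sum_Ap hsym]
        exact hstep3
      have hfin : (∑ i, cc b i ^ (K / 2)) ^ (1 / ρ') * (∑ i, Ap b g' i) ^ (1 / ρ) ≤
          B2 b K ^ (1 / ρ') * (B2 b K ^ (2 / K) * G0 ^ ((K - 2) / K)) ^ (1 / ρ) :=
        mul_le_mul_of_nonneg_left
          (Real.rpow_le_rpow (Finset.sum_nonneg fun i _ => Ap_nonneg hg' i) hsAg' hρr)
          (Real.rpow_nonneg hB2 _)
      have htarget : B2 b K ^ (1 / ρ') * (B2 b K ^ (2 / K) * G0 ^ ((K - 2) / K)) ^ (1 / ρ) =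
          B2 b K ^ (2 * (d + 1) / δ') * Bi b K ^ (w / δ') := by
        rw [hRHS, pow_of_prod hB2 hBi, ← mul_assoc,
          rpow_mul_rpow hB2 (by positivity)
            (mul_nonneg (by linarith : (0:ℝ) ≤ 2 / K + 2 * d / δ * ((K - 2) / K)) hρr)]
        rw [show 1 / ρ' + (2 / K + 2 * d / δ * ((K - 2) / K)) * (1 / ρ) = 2 * (d + 1) / δ' by
            have h2d : 2 * d = δ - w := by rw [hδdef]; ring
            have h2d1 : 2 * (d + 1) = δ' - w := by rw [hδ'def, hδdef]; ring
            rw [hρ'def, hρdef, h2d, h2d1, hδe]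
            field_simp
            ring,
          show w / δ * ((K - 2) / K) * (1 / ρ) = w / δ' by
            rw [hρdef, hδe]
            field_simp]
      calc ∑ i, Ap b g i ^ (K / δ') = ∑ i, Ap b g i ^ vv := by rw [hvvdef]
        _ ≤ ∑ i, cc b i ^ ((1 - τ) * vv) * Ap b g' i ^ (τ * vv) := hsum1
        _ ≤ (∑ i, cc b i ^ (K / 2)) ^ (1 / ρ') * (∑ i, Ap b g' i) ^ (1 / ρ) := hh2
        _ ≤ B2 b K ^ (1 / ρ') * (B2 b K ^ (2 / K) * G0 ^ ((K - 2) / K)) ^ (1 / ρ) := hfin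
        _ = B2 b K ^ (2 * (d + 1) / δ') * Bi b K ^ (w / δ') := htarget

lemma W_one (K : ℝ) : Wgt (b := b) K 0 0 (fun _ => (1:ℝ)) :=
  ⟨le_refl 0, le_refl 0, fun _ => zero_le_one, Or.inl ⟨rfl, rfl, fun _ => rfl⟩⟩

/-- The `snoc` equivalence used to peel the last vertex. -/
def snocEquiv (N n : ℕ) : ((Fin (N + 1) → Fin n) × Fin n) ≃ (Fin (N + 2) → Fin n) where
  toFun q := Fin.snoc q.1 q.2
  invFun v := (fun i => v i.castSucc, v (Fin.last (N + 1)))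
  left_inv q := by
    refine Prod.ext ?_ ?_
    · funext i
      simp [Fin.snoc_castSucc]
    · simp [Fin.snoc_last]
  right_inv v := by
    funext i
    induction i using Fin.lastCases with
    | last => simp [Fin.snoc_last]
    | cast i => simp [Fin.snoc_castSucc]

/-- Main tree-sum estimate, by induction peeling the last vertex. -/
lemma TS (hb : ∀ i j, 0 ≤ b i j) (hsym : ∀ i j, b i j = b j i) {K : ℝ} (hK0 : 0 < K) :
    ∀ (M : ℕ) (p : Fin M → Fin (M + 1)), (∀ i : Fin M, ((p i : ℕ) : ℕ) ≤ (i : ℕ)) →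
      ∀ (g : Fin (M + 1) → Fin n → ℝ) (d w : Fin (M + 1) → ℝ),
      (∀ t, Wgt (b := b) K (d t) (w t) (g t)) →
      K = 2 * ((M : ℝ) + ∑ t, d t) + ∑ t, w t →
      ∑ v : Fin (M + 1) → Fin n,
          (∏ i : Fin M, b (v (p i)) (v i.succ) ^ 2) * ∏ t, g t (v t) ≤
        B2 b K ^ (2 * ((M : ℝ) + ∑ t, d t) / K) * Bi b K ^ ((∑ t, w t) / K) := by
  intro M
  induction M with
  | zero =>
    intro p hp g d w hw hKeq
    simp only [Nat.cast_zero, zero_add, Fin.sum_univ_succ, Fin.sum_univ_zero,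
      add_zero] at hKeq ⊢
    have hsum : ∑ v : Fin (0 + 1) → Fin n, (∏ i : Fin 0, b (v (p i)) (v i.succ) ^ 2) *
        ∏ t, g t (v t) = ∑ x : Fin n, g 0 x := by
      refine Fintype.sum_equiv
        ⟨fun v => v 0, fun x _ => x,
          fun v => funext fun i => congrArg v (Fin.ext (by omega)),
          fun x => rfl⟩ _ _ fun v => ?_
      simp [Fin.prod_univ_succ]
    rw [hsum]
    obtain ⟨hd0, hw0, hg0, hc⟩ := hw 0
    rcases hc with ⟨hd00, hw00, -⟩ | ⟨hδ, hbound⟩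
    · rw [hd00, hw00] at hKeq
      norm_num at hKeq
      exact absurd hKeq (by linarith)
    · have hKd : 2 * d 0 + w 0 = K := by linarith
      have h1 : K / (2 * d 0 + w 0) = 1 := by rw [hKd, div_self hK0.ne']
      calc ∑ x, g 0 x = ∑ x, g 0 x ^ (K / (2 * d 0 + w 0)) := by
            refine Finset.sum_congr rfl fun x _ => ?_
            rw [h1, Real.rpow_one]
        _ ≤ B2 b K ^ (2 * d 0 / (2 * d 0 + w 0)) * Bi b K ^ (w 0 / (2 * d 0 + w 0)) :=
            hbound
        _ = B2 b K ^ (2 * d 0 / K) * Bi b K ^ (w 0 / K) := by rw [hKd]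
  | succ N ih =>
    intro p hp g d w hw hKeq
    have hplt : ((p (Fin.last N) : ℕ)) < N + 1 := by
      have := hp (Fin.last N)
      simp only [Fin.val_last] at this
      omega
    obtain ⟨L, hLdef⟩ : ∃ x : Fin (N + 2), x = Fin.last (N + 1) := ⟨_, rfl⟩
    obtain ⟨pl, hpldef⟩ : ∃ x : Fin (N + 1), x = ⟨(p (Fin.last N) : ℕ), hplt⟩ := ⟨_, rfl⟩
    obtain ⟨p', hp'def⟩ : ∃ x : Fin N → Fin (N + 1), x = fun i =>
        ⟨(p i.castSucc : ℕ), by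
          have := hp i.castSucc
          simp only [Fin.coe_castSucc] at this
          omega⟩ := ⟨_, rfl⟩
    have hp' : ∀ i : Fin N, ((p' i : ℕ)) ≤ (i : ℕ) := fun i => by
      rw [hp'def]
      have := hp i.castSucc
      simpa using this
    obtain ⟨g', hg'def⟩ : ∃ x : Fin (N + 1) → Fin n → ℝ, x = fun t => fun y =>
        g t.castSucc y * (if t = pl then Ap b (g L) y else 1) := ⟨_, rfl⟩
    obtain ⟨d', hd'def⟩ : ∃ x : Fin (N + 1) → ℝ, x = fun t =>
        d t.castSucc + (if t = pl then d L + 1 else 0) := ⟨_, rfl⟩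
    obtain ⟨w', hw'def⟩ : ∃ x : Fin (N + 1) → ℝ, x = fun t =>
        w t.castSucc + (if t = pl then w L else 0) := ⟨_, rfl⟩
    have hdnn : ∀ t, 0 ≤ d t := fun t => (hw t).1
    have hwnn : ∀ t, 0 ≤ w t := fun t => (hw t).2.1
    have hside : 2 * (d L + 1) + w L ≤ K := by
      have h1 : d L ≤ ∑ t, d t :=
        Finset.single_le_sum (fun t _ => hdnn t) (Finset.mem_univ L)
      have h2 : w L ≤ ∑ t, w t :=
        Finset.single_le_sum (fun t _ => hwnn t) (Finset.mem_univ L)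
      have h3 : (1:ℝ) ≤ ((N + 1 : ℕ) : ℝ) := by
        exact_mod_cast Nat.succ_le_succ (Nat.zero_le N)
      rw [hKeq]
      push_cast
      push_cast at h3
      linarith
    have hw' : ∀ t, Wgt (b := b) K (d' t) (w' t) (g' t) := by
      intro t
      by_cases ht : t = pl
      · simp only [hg'def, hd'def, hw'def, if_pos ht]
        exact W_mul hb (hw t.castSucc) (W_apply hb hsym (hw L) hside)
      · simp only [hg'def, hd'def, hw'def, if_neg ht, add_zero, mul_one]
        have := W_mul hb (hw t.castSucc) (W_one (b := b) K)
        simpa using this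
    have hsd : ∑ t, d' t = (∑ t : Fin (N + 1), d t.castSucc) + (d L + 1) := by
      rw [hd'def, Finset.sum_add_distrib, Finset.sum_ite_eq' Finset.univ pl
        (fun _ => d L + 1), if_pos (Finset.mem_univ pl)]
    have hsw : ∑ t, w' t = (∑ t : Fin (N + 1), w t.castSucc) + w L := by
      rw [hw'def, Finset.sum_add_distrib, Finset.sum_ite_eq' Finset.univ pl
        (fun _ => w L), if_pos (Finset.mem_univ pl)]
    have hsd2 : ∑ t : Fin (N + 2), d t = (∑ t : Fin (N + 1), d t.castSucc) + d L := by
      rw [hLdef]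
      exact Fin.sum_univ_castSucc d
    have hsw2 : ∑ t : Fin (N + 2), w t = (∑ t : Fin (N + 1), w t.castSucc) + w L := by
      rw [hLdef]
      exact Fin.sum_univ_castSucc w
    have hmatchd : (2 : ℝ) * ((N : ℝ) + ∑ t, d' t) =
        2 * (((N + 1 : ℕ) : ℝ) + ∑ t : Fin (N + 2), d t) := by
      rw [hsd, hsd2]
      push_cast
      ring
    have hmatchw : ∑ t, w' t = ∑ t : Fin (N + 2), w t := by
      rw [hsw, hsw2]
    have hKeq' : K = 2 * ((N : ℝ) + ∑ t, d' t) + ∑ t, w' t := by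
      rw [hmatchd, hmatchw]
      exact hKeq
    -- the sum identity
    have hS1 : ∑ v : Fin (N + 2) → Fin n,
        (∏ i : Fin (N + 1), b (v (p i)) (v i.succ) ^ 2) * ∏ t, g t (v t) =
        ∑ v' : Fin (N + 1) → Fin n,
        (∏ i : Fin N, b (v' (p' i)) (v' i.succ) ^ 2) * ∏ t, g' t (v' t) := by
      rw [← Equiv.sum_comp (snocEquiv N n) (fun v =>
        (∏ i : Fin (N + 1), b (v (p i)) (v i.succ) ^ 2) * ∏ t, g t (v t))]
      rw [Fintype.sum_prod_type]
      refine Finset.sum_congr rfl fun v' _ => ?_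
      have happ : ∀ x : Fin n, snocEquiv N n (v', x) = Fin.snoc v' x := fun x => rfl
      have hedge : ∀ x : Fin n, ∀ i : Fin N,
          b ((Fin.snoc v' x : Fin (N + 2) → Fin n) (p i.castSucc))
            ((Fin.snoc v' x : Fin (N + 2) → Fin n) i.castSucc.succ) ^ 2 =
          b (v' (p' i)) (v' i.succ) ^ 2 := by
        intro x i
        have h1 : p i.castSucc = (p' i).castSucc := by
          refine Fin.ext ?_
          rw [hp'def]
          simp
        have h2 : i.castSucc.succ = i.succ.castSucc := by
          refine Fin.ext ?_
          simp
        rw [h1, h2, Fin.snoc_castSucc, Fin.snoc_castSucc]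
      have hlastedge : ∀ x : Fin n,
          b ((Fin.snoc v' x : Fin (N + 2) → Fin n) (p (Fin.last N)))
            ((Fin.snoc v' x : Fin (N + 2) → Fin n) (Fin.last N).succ) ^ 2 =
          b (v' pl) x ^ 2 := by
        intro x
        have h1 : p (Fin.last N) = pl.castSucc := by
          refine Fin.ext ?_
          rw [hpldef]
          simp
        have h2 : (Fin.last N).succ = Fin.last (N + 1) := by
          refine Fin.ext ?_
          simp
        rw [h1, h2, Fin.snoc_castSucc, Fin.snoc_last]
      have key : ∀ x : Fin n,
          (∏ i : Fin (N + 1), b ((Fin.snoc v' x : Fin (N + 2) → Fin n) (p i))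
              ((Fin.snoc v' x : Fin (N + 2) → Fin n) i.succ) ^ 2) *
            ∏ t, g t ((Fin.snoc v' x : Fin (N + 2) → Fin n) t) =
          ((∏ i : Fin N, b (v' (p' i)) (v' i.succ) ^ 2) *
            ∏ t : Fin (N + 1), g t.castSucc (v' t)) * (b (v' pl) x ^ 2 * g L x) := by
        intro x
        rw [Fin.prod_univ_castSucc fun i : Fin (N + 1) =>
            b ((Fin.snoc v' x : Fin (N + 2) → Fin n) (p i))
              ((Fin.snoc v' x : Fin (N + 2) → Fin n) i.succ) ^ 2,
          Fin.prod_univ_castSucc fun t : Fin (N + 2) =>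
            g t ((Fin.snoc v' x : Fin (N + 2) → Fin n) t)]
        rw [Finset.prod_congr rfl fun i _ => hedge x i, hlastedge x]
        rw [Finset.prod_congr rfl fun t _ => show
          g t.castSucc ((Fin.snoc v' x : Fin (N + 2) → Fin n) t.castSucc) =
            g t.castSucc (v' t) by rw [Fin.snoc_castSucc]]
        rw [Fin.snoc_last, ← hLdef]
        ring
      calc ∑ x : Fin n, (fun v => (∏ i : Fin (N + 1), b (v (p i)) (v i.succ) ^ 2) *
              ∏ t, g t (v t)) (snocEquiv N n (v', x))
          = ∑ x : Fin n, ((∏ i : Fin N, b (v' (p' i)) (v' i.succ) ^ 2) *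
              ∏ t : Fin (N + 1), g t.castSucc (v' t)) * (b (v' pl) x ^ 2 * g L x) := by
            refine Finset.sum_congr rfl fun x _ => ?_
            rw [happ x]
            exact key x
        _ = (∏ i : Fin N, b (v' (p' i)) (v' i.succ) ^ 2) * ∏ t, g' t (v' t) := by
            rw [← Finset.mul_sum]
            have hprodg' : ∏ t, g' t (v' t) =
                (∏ t : Fin (N + 1), g t.castSucc (v' t)) * Ap b (g L) (v' pl) := by
              simp only [hg'def]
              rw [Finset.prod_mul_distrib]
              congr 1
              rw [Finset.prod_ite_eq' Finset.univ pl (fun t => Ap b (g L) (v' t)),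
                if_pos (Finset.mem_univ pl)]
            rw [hprodg']
            have hap : ∑ x : Fin n, b (v' pl) x ^ 2 * g L x = Ap b (g L) (v' pl) := rfl
            rw [hap]
            ring
    rw [hS1]
    calc ∑ v' : Fin (N + 1) → Fin n,
        (∏ i : Fin N, b (v' (p' i)) (v' i.succ) ^ 2) * ∏ t, g' t (v' t) ≤
        B2 b K ^ (2 * ((N : ℝ) + ∑ t, d' t) / K) * Bi b K ^ ((∑ t, w' t) / K) :=
          ih p' hp' g' d' w' hw' hKeq'
      _ = B2 b K ^ (2 * (((N + 1 : ℕ) : ℝ) + ∑ t : Fin (N + 2), d t) / K) *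
          Bi b K ^ ((∑ t : Fin (N + 2), w t) / K) := by
          rw [hmatchd, hmatchw]

end Machinery

/-- Greedy construction of a spanning-tree ordering of a connected graph. -/
lemma exists_ordering {m : ℕ} (G : SimpleGraph (Fin (m + 1))) (hG : G.Preconnected) :
    ∃ (f : Fin (m + 1) → Fin (m + 1)) (p : Fin m → Fin (m + 1)),
      Function.Bijective f ∧ (∀ i : Fin m, ((p i : ℕ)) ≤ (i : ℕ)) ∧
      ∀ i : Fin m, G.Adj (f (p i)) (f i.succ) := by
  have main : ∀ j : ℕ, j ≤ m → ∃ f : Fin (j + 1) → Fin (m + 1),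
      ∃ p : Fin j → Fin (j + 1), Function.Injective f ∧
        (∀ i : Fin j, ((p i : ℕ)) ≤ (i : ℕ)) ∧
        ∀ i : Fin j, G.Adj (f (p i)) (f i.succ) := by
    intro j
    induction j with
    | zero =>
      intro _
      exact ⟨fun _ => 0, Fin.elim0, fun a c _ => Fin.ext (by omega),
        fun i => i.elim0, fun i => i.elim0⟩
    | succ j ihj =>
      intro hjm
      obtain ⟨f, p, hinj, hp, hadj⟩ := ihj (by omega)
      have hns : ¬ Function.Surjective f := by
        intro hs
        have h1 := Fintype.card_le_of_surjective f hs
        simp only [Fintype.card_fin] at h1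
        omega
      have hex : ∃ y : Fin (m + 1), y ∉ Set.range f := by
        by_contra hc
        push_neg at hc
        exact hns fun y => hc y
      obtain ⟨y, hy⟩ := hex
      obtain ⟨wk⟩ := hG (f 0) y
      obtain ⟨dt, hdmem, hdfst, hdsnd⟩ :=
        wk.exists_boundary_dart (Set.range f) ⟨0, rfl⟩ hy
      obtain ⟨i0, hfi0⟩ := hdfst
      refine ⟨Fin.snoc f dt.snd, Fin.lastCases i0.castSucc (fun i => (p i).castSucc),
        ?_, ?_, ?_⟩
      · intro a c hac
        induction a using Fin.lastCases with
        | last =>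
          induction c using Fin.lastCases with
          | last => rfl
          | cast c =>
            rw [Fin.snoc_last, Fin.snoc_castSucc] at hac
            exact absurd ⟨c, hac.symm⟩ hdsnd
        | cast a =>
          induction c using Fin.lastCases with
          | last =>
            rw [Fin.snoc_last, Fin.snoc_castSucc] at hac
            exact absurd ⟨a, hac⟩ hdsnd
          | cast c =>
            rw [Fin.snoc_castSucc, Fin.snoc_castSucc] at hac
            rw [hinj hac]
      · intro i
        induction i using Fin.lastCases with
        | last =>
          simp only [Fin.lastCases_last]
          simpa using Fin.is_le i0
        | cast i =>
          simp only [Fin.lastCases_castSucc]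
          simpa using hp i
      · intro i
        induction i using Fin.lastCases with
        | last =>
          simp only [Fin.lastCases_last]
          have h2 : (Fin.last j).succ = Fin.last (j + 1) := Fin.ext (by simp)
          rw [h2, Fin.snoc_castSucc, Fin.snoc_last, hfi0]
          exact dt.adj
        | cast i =>
          simp only [Fin.lastCases_castSucc]
          have h2 : i.castSucc.succ = i.succ.castSucc := Fin.ext (by simp)
          rw [h2, Fin.snoc_castSucc, Fin.snoc_castSucc]
          exact hadj i
  obtain ⟨f, p, hinj, hp, hadj⟩ := main m le_rfl
  exact ⟨f, p, Finite.injective_iff_bijective.mp hinj, hp, hadj⟩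



section Assembly

variable {n : ℕ}

lemma Bi_eq (b : Fin (n + 1) → Fin (n + 1) → ℝ) (hb : ∀ i j, 0 ≤ b i j) {K : ℝ}
    (hK : 0 ≤ K) : Bi b K = ∑ i, ⨆ j, b i j ^ K := by
  unfold Bi MM
  refine Finset.sum_congr rfl fun i _ => ?_
  obtain ⟨j0, hj0⟩ := Finite.exists_max (fun j => b i j)
  have h1 : (⨆ j, b i j) = b i j0 :=
    le_antisymm (ciSup_le hj0) (le_ciSup (Set.Finite.bddAbove (Set.finite_range _)) j0)
  have h2 : (⨆ j, b i j ^ K) = b i j0 ^ K := by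
    refine le_antisymm (ciSup_le fun j => Real.rpow_le_rpow (hb i j) (hj0 j) hK)
      (le_ciSup (f := fun j => b i j ^ K) (Set.Finite.bddAbove (Set.finite_range _)) j0)
  rw [h1, h2]

lemma main_case {M : ℕ} (G : SimpleGraph (Fin (M + 2))) [DecidableRel G.Adj]
    (hG : G.Connected) (k : Sym2 (Fin (M + 2)) → ℝ) (hk : ∀ e ∈ G.edgeFinset, 2 ≤ k e)
    (K : ℝ) (hK : K = ∑ e ∈ G.edgeFinset, k e)
    (b : Fin (n + 1) → Fin (n + 1) → ℝ) (hb : ∀ i j, 0 ≤ b i j)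
    (hsym : ∀ i j, b i j = b j i) :
    ∑ v : Fin (M + 2) → Fin (n + 1), ∏ e ∈ G.edgeFinset,
      (Sym2.lift ⟨fun a c => b (v a) (v c), fun a c => hsym (v a) (v c)⟩ e) ^ (k e) ≤
      B2 b K ^ (2 * ((M + 1 : ℕ) : ℝ) / K) * Bi b K ^ ((K - 2 * ((M + 1 : ℕ) : ℝ)) / K)
    := by
  classical
  obtain ⟨σf, p, hbij, hple, hadjσ⟩ := exists_ordering G hG.preconnected
  set σ : Fin (M + 2) ≃ Fin (M + 2) := Equiv.ofBijective σf hbij with hσdef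
  -- the spanning tree edge set
  set Tmap : Fin (M + 1) → Sym2 (Fin (M + 2)) := fun i => s(σf (p i), σf i.succ)
    with hTmap
  have hTinj : Function.Injective Tmap := by
    intro i j hij
    rw [hTmap] at hij
    simp only [Sym2.eq_iff] at hij
    rcases hij with ⟨-, h2⟩ | ⟨h1, h2⟩
    · exact Fin.succ_injective _ (hbij.injective h2)
    · exfalso
      have e1 : p i = j.succ := hbij.injective h1
      have e2 : i.succ = p j := hbij.injective h2
      have l1 := hple i
      have l2 := hple j
      rw [e1] at l1
      rw [← e2] at l2
      simp only [Fin.val_succ] at l1 l2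
      omega
  set Tset : Finset (Sym2 (Fin (M + 2))) := Finset.image Tmap Finset.univ with hTset
  have hTsub : Tset ⊆ G.edgeFinset := by
    intro e he
    rw [hTset] at he
    obtain ⟨i, -, rfl⟩ := Finset.mem_image.mp he
    rw [SimpleGraph.mem_edgeFinset, hTmap]
    exact (SimpleGraph.mem_edgeSet G).mpr (hadjσ i)
  have hTcard : Tset.card = M + 1 := by
    rw [hTset, Finset.card_image_of_injective _ hTinj, Finset.card_univ,
      Fintype.card_fin]
  set exc : Sym2 (Fin (M + 2)) → ℝ := fun e => k e - (if e ∈ Tset then 2 else 0)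
    with hexc
  have hexc0 : ∀ e ∈ G.edgeFinset, 0 ≤ exc e := by
    intro e he
    rw [hexc]
    have := hk e he
    show 0 ≤ k e - if e ∈ Tset then 2 else 0
    split_ifs <;> simp <;> linarith
  set mnv : Sym2 (Fin (M + 2)) → Fin (M + 2) :=
    Sym2.lift ⟨fun a c => min a c, fun a c => min_comm a c⟩ with hmnv
  set wt : Fin (M + 2) → ℝ :=
    fun t => ∑ e ∈ G.edgeFinset.filter (fun e => mnv e = t), exc e with hwt
  have hwt0 : ∀ t, 0 ≤ wt t := fun t =>
    Finset.sum_nonneg fun e he => hexc0 e (Finset.mem_filter.mp he).1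
  have hwtsum : ∑ t, wt t = ∑ e ∈ G.edgeFinset, exc e := by
    rw [hwt]
    exact Finset.sum_fiberwise_of_maps_to (fun e _ => Finset.mem_univ (mnv e)) exc
  have hKsum : ∑ e ∈ G.edgeFinset, exc e = K - 2 * ((M + 1 : ℕ) : ℝ) := by
    simp only [hexc]
    rw [Finset.sum_sub_distrib, ← hK]
    congr 1
    rw [Finset.sum_ite_mem, Finset.inter_eq_right.mpr hTsub, Finset.sum_const, hTcard]
    push_cast
    ring
  have hKtotal : K = 2 * ((M + 1 : ℕ) : ℝ) + ∑ t, wt t := by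
    rw [hwtsum, hKsum]
    ring
  have hKpos : 0 < K := by
    have h1 : 0 ≤ ∑ t, wt t := Finset.sum_nonneg fun t _ => hwt0 t
    have h2 : (1:ℝ) ≤ ((M + 1 : ℕ) : ℝ) := by exact_mod_cast Nat.succ_le_succ (Nat.zero_le M)
    rw [hKtotal]
    linarith
  -- pointwise bound
  have hpt : ∀ v : Fin (M + 2) → Fin (n + 1),
      (∏ e ∈ G.edgeFinset,
        (Sym2.lift ⟨fun a c => b (v a) (v c), fun a c => hsym (v a) (v c)⟩ e) ^ (k e)) ≤
      (∏ i : Fin (M + 1), b (v (σf (p i))) (v (σf i.succ)) ^ 2) *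
        ∏ t, MM b (v t) ^ wt t := by
    intro v
    set ev : Sym2 (Fin (M + 2)) → ℝ :=
      Sym2.lift ⟨fun a c => b (v a) (v c), fun a c => hsym (v a) (v c)⟩ with hev
    have hev0 : ∀ e, 0 ≤ ev e := by
      intro e
      induction e using Sym2.ind with
      | _ a c => rw [hev, Sym2.lift_mk]; exact hb (v a) (v c)
    have hevM : ∀ e, ev e ≤ MM b (v (mnv e)) := by
      intro e
      induction e using Sym2.ind with
      | _ a c =>
        simp only [hev, hmnv, Sym2.lift_mk]
        rcases le_total a c with hac | hac
        · rw [min_eq_left hac]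
          exact le_MM (v a) (v c)
        · rw [min_eq_right hac]
          rw [hsym]
          exact le_MM (v c) (v a)
    have hone : ∀ e ∈ G.edgeFinset,
        ev e ^ (k e) ≤ ev e ^ (if e ∈ Tset then (2:ℝ) else 0) * MM b (v (mnv e)) ^ (exc e)
        := by
      intro e he
      have hsplit : k e = (if e ∈ Tset then (2:ℝ) else 0) + exc e := by
        simp only [hexc]; split_ifs <;> ring
      have hie : (0:ℝ) ≤ (if e ∈ Tset then (2:ℝ) else 0) := by split_ifs <;> norm_num
      rw [hsplit, rpow_add_nonneg (hev0 e) hie (hexc0 e he)]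
      exact mul_le_mul_of_nonneg_left
        (Real.rpow_le_rpow (hev0 e) (hevM e) (hexc0 e he))
        (Real.rpow_nonneg (hev0 e) _)
    calc ∏ e ∈ G.edgeFinset, ev e ^ (k e)
        ≤ ∏ e ∈ G.edgeFinset,
            (ev e ^ (if e ∈ Tset then (2:ℝ) else 0) * MM b (v (mnv e)) ^ (exc e)) :=
          Finset.prod_le_prod (fun e _ => Real.rpow_nonneg (hev0 e) _)
            (fun e he => hone e he)
      _ = (∏ e ∈ G.edgeFinset, ev e ^ (if e ∈ Tset then (2:ℝ) else 0)) *
            ∏ e ∈ G.edgeFinset, MM b (v (mnv e)) ^ (exc e) := Finset.prod_mul_distrib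
      _ = (∏ i : Fin (M + 1), b (v (σf (p i))) (v (σf i.succ)) ^ 2) *
            ∏ t, MM b (v t) ^ wt t := by
          congr 1
          · rw [Finset.prod_congr rfl (fun e (he : e ∈ G.edgeFinset) =>
              show ev e ^ (if e ∈ Tset then (2:ℝ) else 0) =
                (if e ∈ Tset then ev e ^ (2:ℝ) else 1) by
                split_ifs <;> simp [Real.rpow_zero])]
            rw [← Finset.prod_filter, Finset.filter_mem_eq_inter,
              Finset.inter_eq_right.mpr hTsub, hTset]
            rw [Finset.prod_image (fun x _ y _ h => hTinj h)]
            refine Finset.prod_congr rfl fun i _ => ?_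
            rw [hTmap, hev, Sym2.lift_mk, ← Real.rpow_natCast (b _ _) 2]
            norm_num
          · rw [← Finset.prod_fiberwise_of_maps_to
              (fun e (_ : e ∈ G.edgeFinset) => Finset.mem_univ (mnv e))
              (fun e => MM b (v (mnv e)) ^ exc e)]
            refine Finset.prod_congr rfl fun t _ => ?_
            simp only [hwt]
            rw [rpow_sum_nonneg _ (MM_nonneg hb (v t)) exc
              (fun e he => hexc0 e (Finset.mem_filter.mp he).1)]
            refine Finset.prod_congr rfl fun e he => ?_
            rw [(Finset.mem_filter.mp he).2]
  -- sum the pointwise bound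
  have hsum1 : ∑ v : Fin (M + 2) → Fin (n + 1), ∏ e ∈ G.edgeFinset,
      (Sym2.lift ⟨fun a c => b (v a) (v c), fun a c => hsym (v a) (v c)⟩ e) ^ (k e) ≤
      ∑ v : Fin (M + 2) → Fin (n + 1),
        (∏ i : Fin (M + 1), b (v (σf (p i))) (v (σf i.succ)) ^ 2) *
          ∏ t, MM b (v t) ^ wt t :=
    Finset.sum_le_sum fun v _ => hpt v
  -- reindex by the vertex relabelling
  have hbijpre : Function.Bijective
      (fun v : Fin (M + 2) → Fin (n + 1) => v ∘ σf) := by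
    constructor
    · intro v1 v2 h
      funext x
      have h2 := congrFun h (σ.symm x)
      show v1 x = v2 x
      have hx : σf (σ.symm x) = x := σ.apply_symm_apply x
      simpa [Function.comp, hx] using h2
    · intro v
      refine ⟨v ∘ σ.symm, ?_⟩
      funext x
      show v (σ.symm (σf x)) = v x
      have hx : σ.symm (σf x) = x := σ.symm_apply_apply x
      rw [hx]
  have hreindex : ∑ v : Fin (M + 2) → Fin (n + 1),
      (∏ i : Fin (M + 1), b (v (σf (p i))) (v (σf i.succ)) ^ 2) *
        ∏ t, MM b (v t) ^ wt t =
      ∑ v : Fin (M + 2) → Fin (n + 1),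
      (∏ i : Fin (M + 1), b (v (p i)) (v i.succ) ^ 2) *
        ∏ t, MM b (v t) ^ wt (σf t) := by
    have h1 : ∀ v : Fin (M + 2) → Fin (n + 1),
        ∏ t, MM b (v t) ^ wt t = ∏ t, MM b (v (σf t)) ^ wt (σf t) := fun v =>
      (Fintype.prod_bijective σf hbij _ _ fun t => rfl).symm
    rw [Finset.sum_congr rfl fun v _ => by rw [h1 v]]
    exact Fintype.sum_bijective _ hbijpre _ _ fun v => rfl
  -- apply the tree-sum lemma
  have hTS := TS (b := b) hb hsym hKpos (M + 1) p
    (fun i => hple i)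
    (fun t => fun y => MM b y ^ wt (σf t))
    (fun _ => 0) (fun t => wt (σf t))
    (fun t => W_M hb K (hwt0 (σf t)))
    (by
      simp only [Finset.sum_const, Finset.card_univ, Fintype.card_fin, smul_zero,
        add_zero]
      rw [Fintype.sum_bijective σf hbij (fun t => wt (σf t)) wt fun t => rfl]
      exact hKtotal)
  have hfinal : ∑ v : Fin (M + 2) → Fin (n + 1),
      (∏ i : Fin (M + 1), b (v (p i)) (v i.succ) ^ 2) *
        ∏ t, MM b (v t) ^ wt (σf t) ≤
      B2 b K ^ (2 * ((M + 1 : ℕ) : ℝ) / K) * Bi b K ^ ((K - 2 * ((M + 1 : ℕ) : ℝ)) / K)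
      := by
    refine le_trans (le_of_eq ?_) (le_trans hTS (le_of_eq ?_))
    · rfl
    · congr 2
      · simp
      · rw [Fintype.sum_bijective σf hbij (fun t => wt (σf t)) wt fun t => rfl]
        rw [hKtotal]
        push_cast
        ring
  calc ∑ v : Fin (M + 2) → Fin (n + 1), ∏ e ∈ G.edgeFinset,
      (Sym2.lift ⟨fun a c => b (v a) (v c), fun a c => hsym (v a) (v c)⟩ e) ^ (k e)
      ≤ ∑ v : Fin (M + 2) → Fin (n + 1),
        (∏ i : Fin (M + 1), b (v (σf (p i))) (v (σf i.succ)) ^ 2) *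
          ∏ t, MM b (v t) ^ wt t := hsum1
    _ = ∑ v : Fin (M + 2) → Fin (n + 1),
        (∏ i : Fin (M + 1), b (v (p i)) (v i.succ) ^ 2) *
          ∏ t, MM b (v t) ^ wt (σf t) := hreindex
    _ ≤ B2 b K ^ (2 * ((M + 1 : ℕ) : ℝ) / K) *
        Bi b K ^ ((K - 2 * ((M + 1 : ℕ) : ℝ)) / K) := hfinal

end Assembly

end LVH

/-- The value `b_{v(e)}` of the symmetric matrix `b` at the pair of indices assigned
by `v` to the endpoints of the edge `e`. -/
noncomputable def edgeValS {m n : ℕ} (b : Matrix (Fin n) (Fin n) ℝ)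
    (hbsym : ∀ i j, b i j = b j i) (v : Fin m → Fin n) (e : Sym2 (Fin m)) : ℝ :=
  Sym2.lift ⟨fun a c => b (v a) (v c), fun a c => hbsym (v a) (v c)⟩ e

theorem stmt4 {m n : ℕ} (G : SimpleGraph (Fin m)) [DecidableRel G.Adj]
    (hG : G.Connected)
    (k : Sym2 (Fin m) → ℝ) (hk : ∀ e ∈ G.edgeFinset, 2 ≤ k e)
    (K : ℝ) (hK : K = ∑ e ∈ G.edgeFinset, k e)
    (b : Matrix (Fin n) (Fin n) ℝ)
    (hbnn : ∀ i j, 0 ≤ b i j) (hbsym : ∀ i j, b i j = b j i) :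
    ∑ v : Fin m → Fin n, ∏ e ∈ G.edgeFinset, (edgeValS b hbsym v e) ^ (k e) ≤
      (∑ i, (∑ j, b i j ^ 2) ^ (K / 2)) ^ (2 * ((m : ℝ) - 1) / K) *
        (∑ i, ⨆ j, b i j ^ K) ^ (1 - 2 * ((m : ℝ) - 1) / K) := by
  rcases m with _ | m
  · obtain ⟨x⟩ := hG.nonempty
    exact x.elim0
  rcases m with _ | M
  · -- one vertex : no edges
    have hE : G.edgeFinset = ∅ := by
      refine Finset.eq_empty_of_forall_notMem fun e he => ?_
      induction e using Sym2.ind with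
      | _ a c =>
        rw [SimpleGraph.mem_edgeFinset, SimpleGraph.mem_edgeSet] at he
        exact G.ne_of_adj he (Fin.ext (by omega))
    have hK0 : K = 0 := by rw [hK, hE]; simp
    rw [hE, hK0]
    have hexp : 2 * (((1:ℕ) : ℝ) - 1) / 0 = 0 := by norm_num
    simp only [Finset.prod_empty, Finset.sum_const, Finset.card_univ, nsmul_eq_mul,
      mul_one, Nat.cast_one, hexp, Real.rpow_zero, one_mul, sub_zero, Real.rpow_one]
    rcases n with _ | n'
    · haveI : IsEmpty (Fin 1 → Fin 0) := ⟨fun v => (v 0).elim0⟩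
      simp
    · rw [ciSup_const, mul_one]
      norm_num [Fintype.card_fun]
  · -- at least two vertices
    rcases n with _ | n'
    · haveI : IsEmpty (Fin (M + 2) → Fin 0) := ⟨fun v => (v 0).elim0⟩
      rw [Finset.univ_eq_empty, Finset.sum_empty]
      refine mul_nonneg (Real.rpow_nonneg ?_ _) (Real.rpow_nonneg ?_ _) <;>
        · rw [Finset.univ_eq_empty, Finset.sum_empty]
    · -- main case
      have hKpos : 0 < K := by
        obtain ⟨w⟩ := hG.preconnected 0 1
        cases w with
        | @cons _ u _ h q =>
          have hmem : s((0 : Fin (M + 2)), u) ∈ G.edgeFinset := by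
            rw [SimpleGraph.mem_edgeFinset, SimpleGraph.mem_edgeSet]
            exact h
          have h2 : (2:ℝ) ≤ k s((0 : Fin (M + 2)), u) := hk _ hmem
          have h3 : k s((0 : Fin (M + 2)), u) ≤ ∑ e ∈ G.edgeFinset, k e :=
            Finset.single_le_sum (fun e he => le_trans (by norm_num) (hk e he)) hmem
          rw [hK]
          linarith
      have h := LVH.main_case (n := n') G hG k hk K hK b hbnn hbsym
      have hc1 : 2 * (((M + 1 + 1 : ℕ) : ℝ) - 1) / K = 2 * ((M + 1 : ℕ) : ℝ) / K := by
        push_cast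
        ring
      have hc2 : 1 - 2 * (((M + 1 + 1 : ℕ) : ℝ) - 1) / K =
          (K - 2 * ((M + 1 : ℕ) : ℝ)) / K := by
        rw [eq_div_iff hKpos.ne']
        push_cast
        field_simp
        ring
      calc ∑ v : Fin (M + 2) → Fin (n' + 1), ∏ e ∈ G.edgeFinset,
            (edgeValS b hbsym v e) ^ (k e)
          ≤ LVH.B2 b K ^ (2 * ((M + 1 : ℕ) : ℝ) / K) *
            LVH.Bi b K ^ ((K - 2 * ((M + 1 : ℕ) : ℝ)) / K) := h
        _ = (∑ i, (∑ j, b i j ^ 2) ^ (K / 2)) ^ (2 * (((M + 1 + 1 : ℕ) : ℝ) - 1) / K) *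
            (∑ i, ⨆ j, b i j ^ K) ^ (1 - 2 * (((M + 1 + 1 : ℕ) : ℝ) - 1) / K) := by
            rw [hc2, hc1, LVH.Bi_eq b hbnn hKpos.le]
            rfl
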